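/- Fix u₀ < 0 and the prior μ, and let v₀ < v₀' ≤ 0 both satisfy the valuable condition, i.e. (1 − v₀)² + u₀ > (E_μ[θ] − v₀)² and (1 − v₀')² + u₀ > (E_μ[θ] − v₀')². Write η(θ) = √((θ − v₀)² + u₀) + v₀ and η'(θ) = √((θ − v₀')² + u₀) + v₀', and let (ā, θ̄) and (ā', θ̄') be the corresponding threshold pairs, where ā is the unique solution of ∫_{θ̄}¹ (η(θ) − ā) dμ(θ) + ā − E_μ[θ] = 0 with η(θ̄) = ā, and similarly for (ā', θ̄') with η'. Then: (a) η'(θ) < η(θ) for every θ ∈ [0,1] at which both are defined; (b) ā < ā' and θ̄ < θ̄'. -/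

import Mathlib

open MeasureTheory Set

/-- Core algebraic inequality for part (a). -/
lemma sqrt_gap_core (u₀ A B : ℝ) (hu : u₀ < 0) (hA0 : 0 ≤ A)
    (hA : 0 ≤ A ^ 2 + u₀) (hAB : A < B) :
    Real.sqrt (A ^ 2 + u₀) + (B - A) < Real.sqrt (B ^ 2 + u₀) := by
  have hApos : 0 < A := by
    rcases hA0.lt_or_eq with h | h
    · exact h
    · exfalso; nlinarith
  have hB : 0 ≤ B ^ 2 + u₀ := by nlinarith
  set x := Real.sqrt (A ^ 2 + u₀) with hxdef
  set y := Real.sqrt (B ^ 2 + u₀) with hydef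
  have hx2 : x ^ 2 = A ^ 2 + u₀ := Real.sq_sqrt hA
  have hy2 : y ^ 2 = B ^ 2 + u₀ := Real.sq_sqrt hB
  have hx0 : 0 ≤ x := Real.sqrt_nonneg _
  have hy0 : 0 ≤ y := Real.sqrt_nonneg _
  have hxA : x < A := by
    have : x < Real.sqrt (A ^ 2) := Real.sqrt_lt_sqrt hA (by linarith)
    rwa [Real.sqrt_sq hApos.le] at this
  nlinarith [sq_nonneg (y - x)]

/-- Positivity of the integral of a continuous nonnegative function that is
positive at `1`, under a full-support assumption. -/
lemma integral_pos_of_pos_at_one (μ : Measure ℝ) [IsProbabilityMeasure μ]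
    (hfull : ∀ a b : ℝ, 0 ≤ a → a < b → b ≤ 1 → 0 < μ (Ioo a b))
    (k : ℝ → ℝ) (hk : Continuous k) (hk0 : ∀ θ ∈ Icc (0 : ℝ) 1, 0 ≤ k θ)
    (hk1 : 0 < k 1) :
    0 < ∫ θ in Icc (0 : ℝ) 1, k θ ∂μ := by
  have hcont : ContinuousAt k 1 := hk.continuousAt
  rw [Metric.continuousAt_iff] at hcont
  obtain ⟨δ, hδ0, hδ⟩ := hcont (k 1 / 2) (by linarith)
  set m : ℝ := max 0 (1 - δ / 2) with hm
  have hm0 : 0 ≤ m := le_max_left _ _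
  have hm1 : m < 1 := by
    apply max_lt
    · norm_num
    · linarith
  have hkm : ∀ x ∈ Icc m 1, k 1 / 2 ≤ k x := by
    intro x hx
    have h1 : 1 - δ / 2 ≤ m := le_max_right _ _
    have hd : dist x 1 < δ := by
      rw [Real.dist_eq, abs_sub_lt_iff]
      constructor <;> [linarith [hx.2]; linarith [hx.1]]
    have := hδ hd
    rw [Real.dist_eq, abs_sub_lt_iff] at this
    linarith [this.1]
  have hint : IntegrableOn k (Icc (0 : ℝ) 1) μ := hk.integrableOn_Icc
  have hsub : Icc m 1 ⊆ Icc (0 : ℝ) 1 := Icc_subset_Icc hm0 le_rfl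
  have hintm : IntegrableOn k (Icc m 1) μ := hint.mono_set hsub
  have step1 : (k 1 / 2) * (μ (Icc m 1)).toReal ≤ ∫ θ in Icc m 1, k θ ∂μ := by
    have hc : IntegrableOn (fun _ : ℝ => k 1 / 2) (Icc m 1) μ :=
      integrableOn_const (measure_ne_top _ _)
    have := setIntegral_mono_on hc hintm measurableSet_Icc hkm
    simpa [mul_comm, measureReal_def] using this
  have step2 : ∫ θ in Icc m 1, k θ ∂μ ≤ ∫ θ in Icc (0 : ℝ) 1, k θ ∂μ := by
    apply setIntegral_mono_set hint
    · exact (ae_restrict_iff' measurableSet_Icc).2 (ae_of_all _ hk0)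
    · exact HasSubset.Subset.eventuallyLE hsub
  have hmeas : 0 < (μ (Icc m 1)).toReal := by
    apply ENNReal.toReal_pos
    · intro h
      have hmono : μ (Ioo m 1) ≤ μ (Icc m 1) := measure_mono Ioo_subset_Icc_self
      rw [h] at hmono
      exact (hfull m 1 hm0 hm1 le_rfl).ne' (le_antisymm hmono zero_le)
    · exact measure_ne_top _ _
  have : 0 < (k 1 / 2) * (μ (Icc m 1)).toReal := by positivity
  linarith

/-- Rewriting the first-order condition in terms of the pooled integral of `max`. -/
lemma foc_max_integral (μ : Measure ℝ) [IsProbabilityMeasure μ]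
    (hsupp : μ (Icc (0 : ℝ) 1) = 1)
    (f : ℝ → ℝ) (hf : Continuous f) (a t E : ℝ) (ht : t ∈ Icc (0 : ℝ) 1)
    (hlo : ∀ θ ∈ Ico (0 : ℝ) t, f θ ≤ a) (hhi : ∀ θ ∈ Icc t 1, a ≤ f θ)
    (hFOC : (∫ θ in Icc t 1, (f θ - a) ∂μ) + a - E = 0) :
    ∫ θ in Icc (0 : ℝ) 1, max (f θ) a ∂μ = E := by
  have hd : Disjoint (Ico (0 : ℝ) t) (Icc t 1) := by
    rw [Set.disjoint_left]
    rintro x ⟨_, h2⟩ ⟨h3, _⟩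
    exact absurd h3 (not_le.2 h2)
  have hu : Ico (0 : ℝ) t ∪ Icc t 1 = Icc 0 1 := Ico_union_Icc_eq_Icc ht.1 ht.2
  have hintmax : IntegrableOn (fun θ => max (f θ) a) (Icc (0 : ℝ) 1) μ :=
    (hf.max continuous_const).integrableOn_Icc
  have hintf : IntegrableOn f (Icc t 1) μ := hf.integrableOn_Icc
  have hintc : IntegrableOn (fun _ : ℝ => a) (Icc t 1) μ :=
    integrableOn_const (measure_ne_top _ _)
  -- measure split
  have hmsum : (μ (Ico (0 : ℝ) t)).toReal + (μ (Icc t 1)).toReal = 1 := by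
    have h := measure_union (μ := μ) hd measurableSet_Icc
    rw [hu, hsupp] at h
    have h2 := congrArg ENNReal.toReal h
    rwa [ENNReal.toReal_add (measure_ne_top _ _) (measure_ne_top _ _), ENNReal.toReal_one,
      eq_comm] at h2
  -- split the integral
  have hsplit : ∫ θ in Icc (0 : ℝ) 1, max (f θ) a ∂μ
      = (∫ θ in Ico (0 : ℝ) t, max (f θ) a ∂μ) + ∫ θ in Icc t 1, max (f θ) a ∂μ := by
    rw [← hu]
    exact setIntegral_union hd measurableSet_Icc
      ((hintmax.mono_set (hu ▸ subset_union_left)))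
      ((hintmax.mono_set (hu ▸ subset_union_right)))
  have hlo' : ∫ θ in Ico (0 : ℝ) t, max (f θ) a ∂μ = a * (μ (Ico (0 : ℝ) t)).toReal := by
    rw [setIntegral_congr_fun measurableSet_Ico
      (fun θ hθ => max_eq_right (hlo θ hθ) : EqOn (fun θ => max (f θ) a) (fun _ => a) _),
      setIntegral_const, smul_eq_mul, mul_comm, measureReal_def]
  have hhi' : ∫ θ in Icc t 1, max (f θ) a ∂μ = ∫ θ in Icc t 1, f θ ∂μ := by
    exact setIntegral_congr_fun measurableSet_Icc
      (fun θ hθ => max_eq_left (hhi θ hθ))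
  have hsub : ∫ θ in Icc t 1, (f θ - a) ∂μ
      = (∫ θ in Icc t 1, f θ ∂μ) - a * (μ (Icc t 1)).toReal := by
    rw [integral_sub hintf hintc, setIntegral_const, smul_eq_mul, mul_comm, measureReal_def]
  rw [hsub] at hFOC
  rw [hsplit, hlo', hhi']
  have h3 := congrArg (fun x => a * x) hmsum
  simp only [mul_add, mul_one] at h3
  linarith

/-- **Comparative statics in the agent's status quo payoff `v₀`.** Fix `u₀ < 0` and the
prior `μ`, and let `v₀ < v₀' ≤ 0` both satisfy the valuable condition. Then (a) the
separating action decreases pointwise: `η'(θ) < η(θ)` wherever both are defined; and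
(b) both the pooling action and the state threshold increase: `ā < ā'` and `θ̄ < θ̄'`. -/
theorem comparative_statics_v₀
    (μ : Measure ℝ) [IsProbabilityMeasure μ]
    (hsupp : μ (Icc (0 : ℝ) 1) = 1)
    (hfull : ∀ a b : ℝ, 0 ≤ a → a < b → b ≤ 1 → 0 < μ (Ioo a b))
    (u₀ : ℝ) (hu₀ : u₀ < 0)
    (v₀ v₀' : ℝ) (hvv : v₀ < v₀') (hv₀' : v₀' ≤ 0)
    (Eμ : ℝ) (hEμ : Eμ = ∫ θ, θ ∂μ)
    (hval : (Eμ - v₀) ^ 2 < (1 - v₀) ^ 2 + u₀)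
    (hval' : (Eμ - v₀') ^ 2 < (1 - v₀') ^ 2 + u₀)
    (η η' : ℝ → ℝ)
    (hη : ∀ θ, η θ = Real.sqrt ((θ - v₀) ^ 2 + u₀) + v₀)
    (hη' : ∀ θ, η' θ = Real.sqrt ((θ - v₀') ^ 2 + u₀) + v₀')
    (s s' : ℝ) (hs : s = max 0 (Real.sqrt (-u₀) + v₀)) (hs' : s' = max 0 (Real.sqrt (-u₀) + v₀'))
    (abar θbar abar' θbar' : ℝ)
    (hθbar : θbar ∈ Icc s 1) (hηθbar : η θbar = abar)
    (hFOC : (∫ θ in Icc θbar 1, (η θ - abar) ∂μ) + abar - Eμ = 0)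
    (hθbar' : θbar' ∈ Icc s' 1) (hηθbar' : η' θbar' = abar')
    (hFOC' : (∫ θ in Icc θbar' 1, (η' θ - abar') ∂μ) + abar' - Eμ = 0) :
    (∀ θ ∈ Icc (0 : ℝ) 1, 0 ≤ (θ - v₀) ^ 2 + u₀ → 0 ≤ (θ - v₀') ^ 2 + u₀ → η' θ < η θ) ∧
      abar < abar' ∧ θbar < θbar' := by
  have hv₀ : v₀ < 0 := lt_of_lt_of_le hvv hv₀'
  have hcη : Continuous η := by
    rw [funext hη]; fun_prop
  have hcη' : Continuous η' := by
    rw [funext hη']; fun_prop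
  -- part (a)
  have parta : ∀ θ : ℝ, 0 ≤ θ → 0 ≤ (θ - v₀') ^ 2 + u₀ → η' θ < η θ := by
    intro θ h0 hA
    rw [hη, hη']
    have := sqrt_gap_core u₀ (θ - v₀') (θ - v₀) hu₀ (by linarith) hA (by linarith)
    linarith
  -- monotonicity of η and η' on [0, ∞)
  have hmono : ∀ a b : ℝ, 0 ≤ a → a ≤ b → η a ≤ η b := by
    intro a b ha hab
    rw [hη, hη]
    have := Real.sqrt_le_sqrt (show (a - v₀) ^ 2 + u₀ ≤ (b - v₀) ^ 2 + u₀ by nlinarith)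
    linarith
  have hmono' : ∀ a b : ℝ, 0 ≤ a → a ≤ b → η' a ≤ η' b := by
    intro a b ha hab
    rw [hη', hη']
    have := Real.sqrt_le_sqrt (show (a - v₀') ^ 2 + u₀ ≤ (b - v₀') ^ 2 + u₀ by nlinarith)
    linarith
  -- threshold facts
  have hs0 : (0 : ℝ) ≤ s := hs ▸ le_max_left _ _
  have hs'0 : (0 : ℝ) ≤ s' := hs' ▸ le_max_left _ _
  have hθb0 : 0 ≤ θbar := hs0.trans hθbar.1
  have hθb'0 : 0 ≤ θbar' := hs'0.trans hθbar'.1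
  have hsqrtu : Real.sqrt (-u₀) ^ 2 = -u₀ := Real.sq_sqrt (by linarith)
  have hsqrtu0 : 0 ≤ Real.sqrt (-u₀) := Real.sqrt_nonneg _
  have hrad' : ∀ θ : ℝ, s' ≤ θ → 0 ≤ (θ - v₀') ^ 2 + u₀ := by
    intro θ hθ
    have h1 : Real.sqrt (-u₀) + v₀' ≤ θ := le_trans (hs' ▸ le_max_right _ _) hθ
    nlinarith
  -- key strict inequalities at θbar' and 1
  have hs'le1 : s' ≤ 1 := hθbar'.1.trans hθbar'.2
  have hab'lt : abar' < η θbar' := by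
    rw [← hηθbar']
    exact parta θbar' hθb'0 (hrad' θbar' hθbar'.1)
  have h1gt : abar' < η 1 := hab'lt.trans_le (hmono θbar' 1 hθb'0 hθbar'.2)
  have h1gt' : η' 1 < η 1 := parta 1 zero_le_one (hrad' 1 hs'le1)
  -- the max-integrals equal Eμ at the respective solutions
  have hT : ∫ θ in Icc (0 : ℝ) 1, max (η θ) abar ∂μ = Eμ := by
    apply foc_max_integral μ hsupp η hcη abar θbar Eμ ⟨hθb0, hθbar.2⟩ _ _ hFOC
    · intro θ hθ
      rw [← hηθbar]
      exact hmono θ θbar hθ.1 hθ.2.le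
    · intro θ hθ
      rw [← hηθbar]
      exact hmono θbar θ hθb0 hθ.1
  have hT' : ∫ θ in Icc (0 : ℝ) 1, max (η' θ) abar' ∂μ = Eμ := by
    apply foc_max_integral μ hsupp η' hcη' abar' θbar' Eμ ⟨hθb'0, hθbar'.2⟩ _ _ hFOC'
    · intro θ hθ
      rw [← hηθbar']
      exact hmono' θ θbar' hθ.1 hθ.2.le
    · intro θ hθ
      rw [← hηθbar']
      exact hmono' θbar' θ hθb'0 hθ.1
  -- the gap function
  set k : ℝ → ℝ := fun θ => max (η θ) abar' - max (η' θ) abar' with hk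
  have hkc : Continuous k := by
    apply Continuous.sub <;> exact Continuous.max (by assumption) continuous_const
  have hk0 : ∀ θ ∈ Icc (0 : ℝ) 1, 0 ≤ k θ := by
    intro θ hθ
    simp only [hk, sub_nonneg]
    by_cases hc : η' θ ≤ abar'
    · rw [max_eq_right hc]
      exact le_max_right _ _
    · push_neg at hc
      have hθgt : θbar' < θ := by
        by_contra h
        push_neg at h
        have := hmono' θ θbar' hθ.1 h
        rw [hηθbar'] at this
        exact absurd this (not_le.2 hc)
      have hlt : η' θ < η θ := parta θ hθ.1 (hrad' θ (hθbar'.1.trans hθgt.le))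
      calc max (η' θ) abar' = η' θ := max_eq_left hc.le
        _ ≤ η θ := hlt.le
        _ ≤ max (η θ) abar' := le_max_left _ _
  have hk1 : 0 < k 1 := by
    simp only [hk, sub_pos]
    rw [max_eq_left h1gt.le]
    exact max_lt h1gt' h1gt
  have hgap : 0 < ∫ θ in Icc (0 : ℝ) 1, k θ ∂μ :=
    integral_pos_of_pos_at_one μ hfull k hkc hk0 hk1
  have hint1 : IntegrableOn (fun θ => max (η θ) abar') (Icc (0 : ℝ) 1) μ :=
    (hcη.max continuous_const).integrableOn_Icc
  have hint2 : IntegrableOn (fun θ => max (η' θ) abar') (Icc (0 : ℝ) 1) μ :=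
    (hcη'.max continuous_const).integrableOn_Icc
  have hgap' : Eμ < ∫ θ in Icc (0 : ℝ) 1, max (η θ) abar' ∂μ := by
    have := integral_sub hint1 hint2
    rw [← hk] at this
    rw [this, hT'] at hgap
    linarith
  -- conclude abar < abar'
  have hab : abar < abar' := by
    by_contra h
    push_neg at h
    have hmax : ∫ θ in Icc (0 : ℝ) 1, max (η θ) abar' ∂μ
        ≤ ∫ θ in Icc (0 : ℝ) 1, max (η θ) abar ∂μ := by
      apply setIntegral_mono_on hint1 ((hcη.max continuous_const).integrableOn_Icc)
        measurableSet_Icc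
      intro θ _
      exact max_le_max le_rfl h
    rw [hT] at hmax
    linarith
  -- conclude θbar < θbar'
  have hθθ : θbar < θbar' := by
    by_contra h
    push_neg at h
    have : η θbar' ≤ η θbar := hmono θbar' θbar hθb'0 h
    rw [hηθbar] at this
    linarith
  exact ⟨fun θ hθ _ h2 => parta θ hθ.1 h2, hab, hθθ⟩
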